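/- arXiv:2505.12366 — 8 statements merged into one kernel-verified Lean document; each statement's English description precedes it below -/
import Mathlib

section
/- For every real ε ≥ 0 and all real numbers x, y, the GRPO surrogate f(x, y) = min(x·y, clip(x, 1−ε, 1+ε)·y) satisfies: f(x, y) = y·min(x, 1+ε) whenever y > 0, and f(x, y) = −|y|·max(x, 1−ε) whenever y ≤ 0. In particular f(x, y) = 𝟙(y>0)·y·f⁺(x) − 𝟙(y≤0)·|y|·f⁻(x) with f⁺(x) = min(x, 1+ε) and f⁻(x) = max(x, 1−ε). -/
/-- The clipping operator used in PPO-style RL objectives. -/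
noncomputable def clip (x a b : ℝ) : ℝ := max a (min x b)

/-- GRPO's token-level surrogate objective. -/
noncomputable def grpoF (ε x y : ℝ) : ℝ := min (x * y) (clip x (1 - ε) (1 + ε) * y)

theorem stmt_1 (ε : ℝ) (hε : 0 ≤ ε) (x y : ℝ) :
    (0 < y → grpoF ε x y = y * min x (1 + ε)) ∧
    (y ≤ 0 → grpoF ε x y = -(|y| * max x (1 - ε))) ∧
    grpoF ε x y =
      (if 0 < y then y * min x (1 + ε) else 0) -
      (if y ≤ 0 then |y| * max x (1 - ε) else 0) := by
  have hee : (1:ℝ) - ε ≤ 1 + ε := by linarith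
  have h1 : 0 < y → grpoF ε x y = y * min x (1 + ε) := by
    intro hy
    unfold grpoF clip
    rcases le_total x (1 - ε) with h | h
    · rw [min_eq_left (h.trans hee), max_eq_left h, min_eq_left (by nlinarith)]
      ring
    · rcases le_total x (1 + ε) with h2 | h2
      · rw [min_eq_left h2, max_eq_right h, min_self]
        ring
      · rw [min_eq_right h2, max_eq_right hee, min_eq_right (by nlinarith)]
        ring
  have h2 : y ≤ 0 → grpoF ε x y = -(|y| * max x (1 - ε)) := by
    intro hy
    rw [abs_of_nonpos hy]
    unfold grpoF clip
    rcases le_total x (1 - ε) with h | h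
    · rw [min_eq_left (h.trans hee), max_eq_left h, min_eq_right (by nlinarith),
        max_eq_right h]
      ring
    · rcases le_total x (1 + ε) with h2 | h2
      · rw [min_eq_left h2, max_eq_right h, min_self, max_eq_left h]
        ring
      · rw [min_eq_right h2, max_eq_right hee, min_eq_left (by nlinarith),
          max_eq_left (hee.trans h2)]
        ring
  refine ⟨h1, h2, ?_⟩
  by_cases hy : 0 < y
  · simp [hy, not_le.mpr hy, h1 hy]
  · push_neg at hy
    simp [not_lt.mpr hy, hy, h2 hy]
end

section
/- (Proposition 1.) Let Ω be a measurable space, r : Ω → Bool measurable, p ∈ (0,1), and let μ⁺, μ⁻ be probability measures with μ⁺({o | r o = true}) = 1 and μ⁻({o | r o = false}) = 1; set μ = p • μ⁺ + (1−p) • μ⁻ and A(o) = √((1−p)/p) if r o = true, A(o) = −√(p/(1−p)) if r o = false. Let f : ℝ → ℝ → ℝ and f⁺, f⁻ : ℝ → ℝ satisfy f(x, y) = y·f⁺(x) for all x whenever y > 0 and f(x, y) = −|y|·f⁻(x) for all x whenever y ≤ 0. Let ρ : Ω → List ℝ assign to each output a nonempty finite list of token likelihood ratios, and define s⁺(o)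 = (1/(ρ o).length)·Σ_{x ∈ ρ o} f⁺(x), s⁻(o) = (1/(ρ o).length)·Σ_{x ∈ ρ o} f⁻(x), and g(o) = (1/(ρ o).length)·Σ_{x ∈ ρ o} f(x, A(o)). If g is μ-integrable, s⁺ is μ⁺-integrable and s⁻ is μ⁻-integrable, then ∫ g dμ = √(p(1−p)) · ( ∫ s⁺ dμ⁺ − ∫ s⁻ dμ⁻ ). -/
open MeasureTheory

theorem stmt_4 {Ω : Type*} [MeasurableSpace Ω]
    (r : Ω → Bool) (hr : Measurable r)
    (p : ℝ) (hp : p ∈ Set.Ioo (0 : ℝ) 1)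
    (μpos μneg : Measure Ω) [IsProbabilityMeasure μpos] [IsProbabilityMeasure μneg]
    (hpos : μpos {o | r o = true} = 1) (hneg : μneg {o | r o = false} = 1)
    (μ : Measure Ω)
    (hμ : μ = ENNReal.ofReal p • μpos + ENNReal.ofReal (1 - p) • μneg)
    (A : Ω → ℝ)
    (hA : ∀ o, A o = if r o then Real.sqrt ((1 - p) / p) else -Real.sqrt (p / (1 - p)))
    (f : ℝ → ℝ → ℝ) (fp fm : ℝ → ℝ)
    (hfp : ∀ x y, 0 < y → f x y = y * fp x)
    (hfm : ∀ x y, y ≤ 0 → f x y = -(|y| * fm x))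
    (ρ : Ω → List ℝ) (hρ : ∀ o, ρ o ≠ [])
    (sp sm g : Ω → ℝ)
    (hsp : ∀ o, sp o = (1 / ((ρ o).length : ℝ)) * ((ρ o).map fp).sum)
    (hsm : ∀ o, sm o = (1 / ((ρ o).length : ℝ)) * ((ρ o).map fm).sum)
    (hg : ∀ o, g o = (1 / ((ρ o).length : ℝ)) * ((ρ o).map (fun x => f x (A o))).sum)
    (hgint : Integrable g μ) (hspint : Integrable sp μpos) (hsmint : Integrable sm μneg) :
    ∫ o, g o ∂μ =
      Real.sqrt (p * (1 - p)) * ((∫ o, sp o ∂μpos) - ∫ o, sm o ∂μneg) := by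
  obtain ⟨hp0, hp1⟩ := hp
  have h1p : (0:ℝ) < 1 - p := by linarith
  -- pointwise identities on the two sets
  have hgt : ∀ o, r o = true → g o = Real.sqrt ((1-p)/p) * sp o := by
    intro o ho
    have hA' : A o = Real.sqrt ((1-p)/p) := by rw [hA, ho]; simp
    have hApos : 0 < A o := by rw [hA']; exact Real.sqrt_pos.2 (div_pos h1p hp0)
    have hfeq : (fun x => f x (A o)) = fun x => A o * fp x :=
      funext fun x => hfp x _ hApos
    rw [hg, hsp, hfeq, ← hA']
    have : ((ρ o).map fun x => A o * fp x).sum = A o * ((ρ o).map fp).sum := by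
      induction ρ o with
      | nil => simp
      | cons a l ih => simp [ih]; ring
    rw [this]; ring
  have hgf : ∀ o, r o = false → g o = -(Real.sqrt (p/(1-p)) * sm o) := by
    intro o ho
    have hA' : A o = -Real.sqrt (p/(1-p)) := by rw [hA, ho]; simp
    have hAne : A o ≤ 0 := by rw [hA']; simp [Real.sqrt_nonneg]
    have habs : |A o| = Real.sqrt (p/(1-p)) := by
      rw [hA', abs_neg, abs_of_nonneg (Real.sqrt_nonneg _)]
    have hfeq : (fun x => f x (A o)) = fun x => -(Real.sqrt (p/(1-p)) * fm x) := by
      funext x; rw [hfm x _ hAne, habs]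
    rw [hg, hsm, hfeq]
    have : ((ρ o).map fun x => -(Real.sqrt (p/(1-p)) * fm x)).sum
        = -(Real.sqrt (p/(1-p)) * ((ρ o).map fm).sum) := by
      induction ρ o with
      | nil => simp
      | cons a l ih => simp [ih]; ring
    rw [this]; ring
  -- null complements
  have hmt : MeasurableSet {o | r o = true} := hr (measurableSet_singleton true)
  have hmf : MeasurableSet {o | r o = false} := hr (measurableSet_singleton false)
  have hposc : μpos {o | r o = true}ᶜ = 0 := by
    rw [measure_compl hmt (measure_ne_top _ _), hpos]; simp
  have hnegc : μneg {o | r o = false}ᶜ = 0 := by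
    rw [measure_compl hmf (measure_ne_top _ _), hneg]; simp
  have haep : g =ᵐ[μpos] fun o => Real.sqrt ((1-p)/p) * sp o := by
    refine measure_mono_null ?_ hposc
    intro o ho
    simp only [Set.mem_compl_iff, Set.mem_setOf_eq]
    intro h; exact ho (hgt o h)
  have haen : g =ᵐ[μneg] fun o => -(Real.sqrt (p/(1-p)) * sm o) := by
    refine measure_mono_null ?_ hnegc
    intro o ho
    simp only [Set.mem_compl_iff, Set.mem_setOf_eq]
    intro h; exact ho (hgf o h)
  -- split integral
  rw [hμ] at hgint
  have hint1 : Integrable g (ENNReal.ofReal p • μpos) := hgint.left_of_add_measure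
  have hint2 : Integrable g (ENNReal.ofReal (1-p) • μneg) := hgint.right_of_add_measure
  rw [hμ, integral_add_measure hint1 hint2, integral_smul_measure, integral_smul_measure,
    ENNReal.toReal_ofReal hp0.le, ENNReal.toReal_ofReal h1p.le,
    integral_congr_ae haep, integral_congr_ae haen]
  simp only [integral_neg, integral_const_mul, smul_eq_mul]
  have hsqp : Real.sqrt p * Real.sqrt p = p := Real.mul_self_sqrt hp0.le
  have hsq1p : Real.sqrt (1-p) * Real.sqrt (1-p) = 1-p := Real.mul_self_sqrt h1p.le
  have hsppos : 0 < Real.sqrt p := Real.sqrt_pos.2 hp0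
  have hs1ppos : 0 < Real.sqrt (1-p) := Real.sqrt_pos.2 h1p
  have e1 : p * Real.sqrt ((1-p)/p) = Real.sqrt (p*(1-p)) := by
    rw [Real.sqrt_mul hp0.le, Real.sqrt_div h1p.le]
    field_simp
    linear_combination (-1 : ℝ) * hsqp
  have e2 : (1-p) * Real.sqrt (p/(1-p)) = Real.sqrt (p*(1-p)) := by
    rw [Real.sqrt_mul hp0.le, Real.sqrt_div hp0.le]
    field_simp
    linear_combination (-1 : ℝ) * hsq1p
  linear_combination (∫ o, sp o ∂μpos) * e1 - (∫ o, sm o ∂μneg) * e2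
end

section
/- (GRPO instance of Proposition 1.) Let Ω, r, p, μ⁺, μ⁻, μ, A, ρ be as in the mixture setup, and let ε ≥ 0. Define the clipped scores s⁺(o) = (1/(ρ o).length)·Σ_{x ∈ ρ o} min(x, 1+ε) and s⁻(o) = (1/(ρ o).length)·Σ_{x ∈ ρ o} max(x, 1−ε), and the GRPO integrand G(o) = (1/(ρ o).length)·Σ_{x ∈ ρ o} min(x·A(o), clip(x, 1−ε, 1+ε)·A(o)). If G is μ-integrable, s⁺ is μ⁺-integrable and s⁻ is μ⁻-integrable, then ∫ G dμ = √(p(1−p)) · ( ∫ s⁺ dμ⁺ − ∫ s⁻ dμ⁻ ). -/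
open MeasureTheory

lemma min_clip (x a b : ℝ) (h : a ≤ b) : min x (clip x a b) = min x b := by
  unfold clip
  rcases le_total x a with h1 | h1 <;> rcases le_total x b with h2 | h2 <;>
    simp [min_def, max_def] <;> split_ifs <;> linarith

lemma max_clip (x a b : ℝ) (h : a ≤ b) : max x (clip x a b) = max x a := by
  unfold clip
  rcases le_total x a with h1 | h1 <;> rcases le_total x b with h2 | h2 <;>
    simp [min_def, max_def] <;> split_ifs <;> linarith

lemma min_mul_nonneg (a b c : ℝ) (hc : 0 ≤ c) : min (a * c) (b * c) = min a b * c := by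
  rcases le_total a b with h | h <;> simp [min_def] <;> split_ifs <;> nlinarith

lemma min_mul_nonpos (a b c : ℝ) (hc : c ≤ 0) : min (a * c) (b * c) = max a b * c := by
  rcases le_total a b with h | h <;> simp [min_def, max_def] <;> split_ifs <;> nlinarith

lemma list_sum_map_mul (l : List ℝ) (f : ℝ → ℝ) (c : ℝ) :
    (l.map fun x => f x * c).sum = (l.map f).sum * c := by
  induction l with
  | nil => simp
  | cons a t ih => simp [ih]; ring

theorem stmt_5 {Ω : Type*} [MeasurableSpace Ω]
    (r : Ω → Bool) (hr : Measurable r)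
    (p : ℝ) (hp : p ∈ Set.Ioo (0 : ℝ) 1)
    (μpos μneg : Measure Ω) [IsProbabilityMeasure μpos] [IsProbabilityMeasure μneg]
    (hpos : μpos {o | r o = true} = 1) (hneg : μneg {o | r o = false} = 1)
    (μ : Measure Ω)
    (hμ : μ = ENNReal.ofReal p • μpos + ENNReal.ofReal (1 - p) • μneg)
    (A : Ω → ℝ)
    (hA : ∀ o, A o = if r o then Real.sqrt ((1 - p) / p) else -Real.sqrt (p / (1 - p)))
    (ε : ℝ) (hε : 0 ≤ ε)
    (ρ : Ω → List ℝ) (hρ : ∀ o, ρ o ≠ [])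
    (sp sm G : Ω → ℝ)
    (hsp : ∀ o, sp o = (1 / ((ρ o).length : ℝ)) * ((ρ o).map (fun x => min x (1 + ε))).sum)
    (hsm : ∀ o, sm o = (1 / ((ρ o).length : ℝ)) * ((ρ o).map (fun x => max x (1 - ε))).sum)
    (hG : ∀ o, G o = (1 / ((ρ o).length : ℝ)) *
      ((ρ o).map (fun x => min (x * A o) (clip x (1 - ε) (1 + ε) * A o))).sum)
    (hGint : Integrable G μ) (hspint : Integrable sp μpos) (hsmint : Integrable sm μneg) :
    ∫ o, G o ∂μ =
      Real.sqrt (p * (1 - p)) * ((∫ o, sp o ∂μpos) - ∫ o, sm o ∂μneg) := by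
  obtain ⟨hp0, hp1⟩ := hp
  have h1p : (0:ℝ) < 1 - p := by linarith
  have hab : (1 : ℝ) - ε ≤ 1 + ε := by linarith
  set cp := Real.sqrt ((1 - p) / p) with hcp
  set cm := Real.sqrt (p / (1 - p)) with hcm
  -- pointwise identities
  have hGt : ∀ o, r o = true → G o = cp * sp o := by
    intro o ho
    have hAo : A o = cp := by rw [hA, ho, if_pos rfl]
    rw [hG, hsp]
    have : ((ρ o).map fun x => min (x * A o) (clip x (1 - ε) (1 + ε) * A o)).sum
        = ((ρ o).map fun x => min x (1 + ε)).sum * cp := by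
      rw [← list_sum_map_mul]
      refine congrArg List.sum (List.map_congr_left fun x _ => ?_)
      rw [hAo, min_mul_nonneg _ _ _ (Real.sqrt_nonneg _), min_clip _ _ _ hab]
    rw [this]; ring
  have hGf : ∀ o, r o = false → G o = -cm * sm o := by
    intro o ho
    have hAo : A o = -cm := by rw [hA, ho]; simp
    rw [hG, hsm]
    have : ((ρ o).map fun x => min (x * A o) (clip x (1 - ε) (1 + ε) * A o)).sum
        = ((ρ o).map fun x => max x (1 - ε)).sum * (-cm) := by
      rw [← list_sum_map_mul]
      refine congrArg List.sum (List.map_congr_left fun x _ => ?_)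
      rw [hAo, min_mul_nonpos _ _ _ (neg_nonpos.mpr (Real.sqrt_nonneg _)),
        max_clip _ _ _ hab]
    rw [this]; ring
  -- a.e. statements
  have hmt : MeasurableSet {o | r o = true} := hr (measurableSet_singleton true)
  have hmf : MeasurableSet {o | r o = false} := hr (measurableSet_singleton false)
  have haet : ∀ᵐ o ∂μpos, r o = true := by
    rw [ae_iff]
    have : {o | ¬ r o = true} = {o | r o = true}ᶜ := rfl
    rw [this, prob_compl_eq_zero_iff hmt]; exact hpos
  have haef : ∀ᵐ o ∂μneg, r o = false := by
    rw [ae_iff]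
    have : {o | ¬ r o = false} = {o | r o = false}ᶜ := rfl
    rw [this, prob_compl_eq_zero_iff hmf]; exact hneg
  have hIpos : ∫ o, G o ∂μpos = cp * ∫ o, sp o ∂μpos := by
    rw [← integral_const_mul]
    exact integral_congr_ae (haet.mono fun o ho => hGt o ho)
  have hIneg : ∫ o, G o ∂μneg = -cm * ∫ o, sm o ∂μneg := by
    rw [← integral_const_mul]
    exact integral_congr_ae (haef.mono fun o ho => hGf o ho)
  have hi1 : Integrable G (ENNReal.ofReal p • μpos) := by
    refine hGint.mono_measure ?_
    rw [hμ]; exact Measure.le_add_right le_rfl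
  have hi2 : Integrable G (ENNReal.ofReal (1 - p) • μneg) := by
    refine hGint.mono_measure ?_
    rw [hμ]; exact Measure.le_add_left le_rfl
  rw [hμ, integral_add_measure hi1 hi2, integral_smul_measure, integral_smul_measure,
    ENNReal.toReal_ofReal hp0.le, ENNReal.toReal_ofReal h1p.le, hIpos, hIneg]
  have e1 : p * cp = Real.sqrt (p * (1 - p)) := by
    rw [hcp, show p * (1 - p) = p ^ 2 * ((1 - p) / p) by field_simp,
      Real.sqrt_mul (by positivity), Real.sqrt_sq hp0.le]
  have e2 : (1 - p) * cm = Real.sqrt (p * (1 - p)) := by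
    rw [hcm, show p * (1 - p) = (1 - p) ^ 2 * (p / (1 - p)) by field_simp,
      Real.sqrt_mul (by positivity), Real.sqrt_sq h1p.le]
  simp only [smul_eq_mul]
  linear_combination (∫ o, sp o ∂μpos) * e1 - (∫ o, sm o ∂μneg) * e2
end

section
/- Let Ω, r, p, μ⁺, μ⁻, μ, A be as in the mixture setup. For every h : Ω → ℝ such that h is μ⁺-integrable, h is μ⁻-integrable, and h·A is μ-integrable, one has ∫ h(o)·A(o) dμ(o) = √(p(1−p)) · ( ∫ h dμ⁺ − ∫ h dμ⁻ ). (This identity yields the difficulty weight √(p(1−p)) in the TRPO and vanilla policy-gradient surrogate objectives, where h is respectively the per-output averaged likelihood ratio or averaged log-likelihood.) -/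
open MeasureTheory

theorem stmt_6 {Ω : Type*} [MeasurableSpace Ω]
    (r : Ω → Bool) (hr : Measurable r)
    (p : ℝ) (hp : p ∈ Set.Ioo (0 : ℝ) 1)
    (μpos μneg : Measure Ω) [IsProbabilityMeasure μpos] [IsProbabilityMeasure μneg]
    (hpos : μpos {o | r o = true} = 1) (hneg : μneg {o | r o = false} = 1)
    (μ : Measure Ω)
    (hμ : μ = ENNReal.ofReal p • μpos + ENNReal.ofReal (1 - p) • μneg)
    (A : Ω → ℝ)
    (hA : ∀ o, A o = if r o then Real.sqrt ((1 - p) / p) else -Real.sqrt (p / (1 - p)))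
    (h : Ω → ℝ)
    (hpint : Integrable h μpos) (hmint : Integrable h μneg)
    (hAint : Integrable (fun o => h o * A o) μ) :
    ∫ o, h o * A o ∂μ =
      Real.sqrt (p * (1 - p)) * ((∫ o, h o ∂μpos) - ∫ o, h o ∂μneg) := by
  obtain ⟨hp0, hp1⟩ := hp
  have h1p : (0:ℝ) < 1 - p := by linarith
  have hmt : MeasurableSet {o | r o = true} := hr (measurableSet_singleton true)
  have hmf : MeasurableSet {o | r o = false} := hr (measurableSet_singleton false)
  -- a.e. statements
  have haepos : ∀ᵐ o ∂μpos, r o = true := by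
    rw [ae_iff]
    have : {o | ¬ r o = true} = {o | r o = true}ᶜ := rfl
    rw [this, prob_compl_eq_zero_iff hmt]
    exact hpos
  have haeneg : ∀ᵐ o ∂μneg, r o = false := by
    rw [ae_iff]
    have : {o | ¬ r o = false} = {o | r o = false}ᶜ := rfl
    rw [this, prob_compl_eq_zero_iff hmf]
    exact hneg
  have heqp : (fun o => h o * A o) =ᵐ[μpos]
      (fun o => h o * Real.sqrt ((1 - p) / p)) := by
    filter_upwards [haepos] with o ho
    rw [hA o, ho, if_pos rfl]
  have heqn : (fun o => h o * A o) =ᵐ[μneg]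
      (fun o => h o * (-Real.sqrt (p / (1 - p)))) := by
    filter_upwards [haeneg] with o ho
    rw [hA o, ho]
    simp
  have I1 : Integrable (fun o => h o * A o) μpos :=
    (hpint.mul_const _).congr heqp.symm
  have I2 : Integrable (fun o => h o * A o) μneg :=
    (hmint.mul_const _).congr heqn.symm
  have e1 : ∫ o, h o * A o ∂μpos = Real.sqrt ((1 - p) / p) * ∫ o, h o ∂μpos := by
    rw [integral_congr_ae heqp, integral_mul_const, mul_comm]
  have e2 : ∫ o, h o * A o ∂μneg = -Real.sqrt (p / (1 - p)) * ∫ o, h o ∂μneg := by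
    rw [integral_congr_ae heqn, integral_mul_const, mul_comm]
  have hsplit : ∫ o, h o * A o ∂μ =
      p * ∫ o, h o * A o ∂μpos + (1 - p) * ∫ o, h o * A o ∂μneg := by
    rw [hμ, integral_add_measure (I1.smul_measure ENNReal.ofReal_ne_top)
        (I2.smul_measure ENNReal.ofReal_ne_top),
      integral_smul_measure, integral_smul_measure,
      ENNReal.toReal_ofReal hp0.le, ENNReal.toReal_ofReal h1p.le]
    simp [smul_eq_mul]
  rw [hsplit, e1, e2]
  set Ip := ∫ o, h o ∂μpos
  set In := ∫ o, h o ∂μneg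
  have hsp : Real.sqrt p > 0 := Real.sqrt_pos.mpr hp0
  have hsq : Real.sqrt (1 - p) > 0 := Real.sqrt_pos.mpr h1p
  have h1 : Real.sqrt ((1 - p) / p) = Real.sqrt (1 - p) / Real.sqrt p :=
    Real.sqrt_div' _ hp0.le ▸ Real.sqrt_div h1p.le p
  have h2 : Real.sqrt (p / (1 - p)) = Real.sqrt p / Real.sqrt (1 - p) :=
    Real.sqrt_div hp0.le _
  have h3 : Real.sqrt (p * (1 - p)) = Real.sqrt p * Real.sqrt (1 - p) :=
    Real.sqrt_mul hp0.le _
  have hpe : p = Real.sqrt p * Real.sqrt p := (Real.mul_self_sqrt hp0.le).symm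
  have hqe : 1 - p = Real.sqrt (1 - p) * Real.sqrt (1 - p) :=
    (Real.mul_self_sqrt h1p.le).symm
  rw [h1, h2, h3]
  set a := Real.sqrt p with ha
  set b := Real.sqrt (1 - p) with hb
  field_simp
  linear_combination (b * b * Ip) * hpe - (a * a * In) * hqe
end

section
/- Let Ω, r, p, μ⁺, μ⁻, μ be as in the mixture setup and let Â(o) = 1−p if r o = true and Â(o) = −p if r o = false be the unnormalized advantage. For every h : Ω → ℝ such that h is μ⁺-integrable, h is μ⁻-integrable, and h·Â is μ-integrable, one has ∫ h(o)·Â(o) dμ(o) = p(1−p) · ( ∫ h dμ⁺ − ∫ h dμ⁻ ). Hence methods using the unnormalized advantage (Dr. GRPO) carry the question-level difficulty weight p(1−p). -/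
open MeasureTheory

theorem stmt_7 {Ω : Type*} [MeasurableSpace Ω]
    (r : Ω → Bool) (hr : Measurable r)
    (p : ℝ) (hp : p ∈ Set.Ioo (0 : ℝ) 1)
    (μpos μneg : Measure Ω) [IsProbabilityMeasure μpos] [IsProbabilityMeasure μneg]
    (hpos : μpos {o | r o = true} = 1) (hneg : μneg {o | r o = false} = 1)
    (μ : Measure Ω)
    (hμ : μ = ENNReal.ofReal p • μpos + ENNReal.ofReal (1 - p) • μneg)
    (Ahat : Ω → ℝ)
    (hAhat : ∀ o, Ahat o = if r o then 1 - p else -p)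
    (h : Ω → ℝ)
    (hpint : Integrable h μpos) (hmint : Integrable h μneg)
    (hAint : Integrable (fun o => h o * Ahat o) μ) :
    ∫ o, h o * Ahat o ∂μ =
      p * (1 - p) * ((∫ o, h o ∂μpos) - ∫ o, h o ∂μneg) := by
  obtain ⟨hp0, hp1⟩ := hp
  -- a.e. facts
  have haepos : ∀ᵐ o ∂μpos, r o = true := by
    rw [ae_iff]
    have : {o | ¬ r o = true} = {o | r o = true}ᶜ := rfl
    have hm : MeasurableSet {o | r o = true} := hr (measurableSet_singleton true)
    rw [this, measure_compl hm (measure_ne_top _ _), hpos]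
    simp
  have haeneg : ∀ᵐ o ∂μneg, r o = false := by
    rw [ae_iff]
    have : {o | ¬ r o = false} = {o | r o = false}ᶜ := rfl
    have hm : MeasurableSet {o | r o = false} := hr (measurableSet_singleton false)
    rw [this, measure_compl hm (measure_ne_top _ _), hneg]
    simp
  have hcongp : (fun o => h o * Ahat o) =ᵐ[μpos] fun o => (1 - p) * h o := by
    filter_upwards [haepos] with o ho
    rw [hAhat, ho]; simp [mul_comm]
  have hcongn : (fun o => h o * Ahat o) =ᵐ[μneg] fun o => (-p) * h o := by
    filter_upwards [haeneg] with o ho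
    rw [hAhat, ho]; simp [mul_comm]
  have hip : Integrable (fun o => h o * Ahat o) μpos :=
    (hpint.const_mul (1 - p)).congr hcongp.symm
  have hin : Integrable (fun o => h o * Ahat o) μneg :=
    (hmint.const_mul (-p)).congr hcongn.symm
  have hIp : ∫ o, h o * Ahat o ∂μpos = (1 - p) * ∫ o, h o ∂μpos := by
    rw [integral_congr_ae hcongp, integral_const_mul]
  have hIn : ∫ o, h o * Ahat o ∂μneg = (-p) * ∫ o, h o ∂μneg := by
    rw [integral_congr_ae hcongn, integral_const_mul]
  rw [hμ, integral_add_measure (hip.smul_measure (by simp)) (hin.smul_measure (by simp)),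
    integral_smul_measure, integral_smul_measure, hIp, hIn,
    ENNReal.toReal_ofReal hp0.le, ENNReal.toReal_ofReal (by linarith)]
  simp only [smul_eq_mul]
  ring
end

section
/- (Dr. GRPO decomposition.) Let Ω, r, p, μ⁺, μ⁻, μ, ρ be as in the mixture setup, let Â(o) = 1−p if r o = true and Â(o) = −p otherwise, and let ε ≥ 0. Define s⁺(o) = Σ_{x ∈ ρ o} min(x, 1+ε), s⁻(o) = Σ_{x ∈ ρ o} max(x, 1−ε), and G(o) = Σ_{x ∈ ρ o} min(x·Â(o), clip(x, 1−ε, 1+ε)·Â(o)). If G is μ-integrable, s⁺ is μ⁺-integrable and s⁻ is μ⁻-integrable, then ∫ G dμ = p(1−p) · ( ∫ s⁺ dμ⁺ − ∫ s⁻ dμ⁻ ). -/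
open MeasureTheory

lemma min_clip_aux (x a b : ℝ) (hab : a ≤ b) : min x (clip x a b) = min x b := by
  unfold clip
  rcases le_total x a with h1|h1 <;> rcases le_total x b with h2|h2 <;>
    simp [min_def, max_def] <;> split_ifs <;> linarith

lemma max_clip_aux (x a b : ℝ) (hab : a ≤ b) : max x (clip x a b) = max x a := by
  unfold clip
  rcases le_total x a with h1|h1 <;> rcases le_total x b with h2|h2 <;>
    simp [min_def, max_def] <;> split_ifs <;> linarith

lemma min_mul_nonpos_aux (x c A : ℝ) (hA : A ≤ 0) : min (x*A) (c*A) = max x c * A := by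
  rcases le_total x c with h|h <;> simp [min_def, max_def] <;> split_ifs <;> nlinarith

theorem stmt_8 {Ω : Type*} [MeasurableSpace Ω]
    (r : Ω → Bool) (hr : Measurable r)
    (p : ℝ) (hp : p ∈ Set.Ioo (0 : ℝ) 1)
    (μpos μneg : Measure Ω) [IsProbabilityMeasure μpos] [IsProbabilityMeasure μneg]
    (hpos : μpos {o | r o = true} = 1) (hneg : μneg {o | r o = false} = 1)
    (μ : Measure Ω)
    (hμ : μ = ENNReal.ofReal p • μpos + ENNReal.ofReal (1 - p) • μneg)
    (Ahat : Ω → ℝ)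
    (hAhat : ∀ o, Ahat o = if r o then 1 - p else -p)
    (ε : ℝ) (hε : 0 ≤ ε)
    (ρ : Ω → List ℝ) (hρ : ∀ o, ρ o ≠ [])
    (sp sm G : Ω → ℝ)
    (hsp : ∀ o, sp o = ((ρ o).map (fun x => min x (1 + ε))).sum)
    (hsm : ∀ o, sm o = ((ρ o).map (fun x => max x (1 - ε))).sum)
    (hG : ∀ o, G o =
      ((ρ o).map (fun x => min (x * Ahat o) (clip x (1 - ε) (1 + ε) * Ahat o))).sum)
    (hGint : Integrable G μ) (hspint : Integrable sp μpos) (hsmint : Integrable sm μneg) :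
    ∫ o, G o ∂μ =
      p * (1 - p) * ((∫ o, sp o ∂μpos) - ∫ o, sm o ∂μneg) := by
  have hab : (1 : ℝ) - ε ≤ 1 + ε := by linarith
  have hp0 : (0:ℝ) < p := hp.1
  have hp1 : p < 1 := hp.2
  have hmeas : MeasurableSet {o | r o = true} := hr (measurableSet_singleton true)
  have hGpos : ∀ o, r o = true → G o = (1 - p) * sp o := by
    intro o ho
    have hA : Ahat o = 1 - p := by rw [hAhat]; simp [ho]
    rw [hG, hsp]
    rw [show ((ρ o).map (fun x => min (x * Ahat o) (clip x (1 - ε) (1 + ε) * Ahat o)))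
        = ((ρ o).map (fun x => min x (1 + ε) * (1 - p))) from ?_]
    · rw [List.sum_map_mul_right]; ring
    · apply List.map_congr_left
      intro x _
      rw [hA, ← min_mul_of_nonneg _ _ (by linarith : (0:ℝ) ≤ 1 - p),
        min_clip_aux x _ _ hab]
  have hGneg : ∀ o, r o = false → G o = -p * sm o := by
    intro o ho
    have hA : Ahat o = -p := by rw [hAhat]; simp [ho]
    rw [hG, hsm]
    rw [show ((ρ o).map (fun x => min (x * Ahat o) (clip x (1 - ε) (1 + ε) * Ahat o)))
        = ((ρ o).map (fun x => max x (1 - ε) * (-p))) from ?_]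
    · rw [List.sum_map_mul_right]; ring
    · apply List.map_congr_left
      intro x _
      rw [hA, min_mul_nonpos_aux _ _ _ (by linarith : -p ≤ 0),
        max_clip_aux x _ _ hab]
  have haepos : ∀ᵐ o ∂μpos, r o = true := by
    rw [Filter.eventually_iff, mem_ae_iff]
    have h := measure_compl (μ := μpos) hmeas (measure_ne_top _ _)
    simp [hpos] at h
    simpa using h
  have haeneg : ∀ᵐ o ∂μneg, r o = false := by
    rw [Filter.eventually_iff, mem_ae_iff]
    have hmeas' : MeasurableSet {o | r o = false} := hr (measurableSet_singleton false)
    have h := measure_compl (μ := μneg) hmeas' (measure_ne_top _ _)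
    simp [hneg] at h
    simpa using h
  have hIpos : ∫ o, G o ∂μpos = (1 - p) * ∫ o, sp o ∂μpos := by
    rw [show ∫ o, G o ∂μpos = ∫ o, (1 - p) * sp o ∂μpos from
      integral_congr_ae (haepos.mono fun o ho => hGpos o ho)]
    exact integral_const_mul _ _
  have hIneg : ∫ o, G o ∂μneg = -p * ∫ o, sm o ∂μneg := by
    rw [show ∫ o, G o ∂μneg = ∫ o, -p * sm o ∂μneg from
      integral_congr_ae (haeneg.mono fun o ho => hGneg o ho)]
    exact integral_const_mul _ _
  rw [hμ] at hGint ⊢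
  rw [integrable_add_measure] at hGint
  rw [integral_add_measure hGint.1 hGint.2, integral_smul_measure, integral_smul_measure,
    ENNReal.toReal_ofReal hp0.le, ENNReal.toReal_ofReal (by linarith : (0:ℝ) ≤ 1 - p),
    hIpos, hIneg]
  simp only [smul_eq_mul]
  ring
end

section
/- (GPG decomposition.) Let Ω, r, p, μ⁺, μ⁻, μ be as in the mixture setup, let Â(o) = 1−p if r o = true and Â(o) = −p otherwise, and let α > 0. Let ρ : Ω → List ℝ assign to each output its nonempty list of token log-probabilities, assume o ↦ (ρ o).length is μ-integrable, set L = ∫ (ρ o).length dμ(o), and define s(o) = (1/L)·Σ_{x ∈ ρ o} x. If s is μ⁺-integrable, μ⁻-integrable, and s·Â is μ-integrable, then ∫ α·s(o)·Â(o) dμ(o) = α·p(1−p) · ( ∫ s dμ⁺ − ∫ s dμ⁻ ). -/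
open MeasureTheory

theorem stmt_10 {Ω : Type*} [MeasurableSpace Ω]
    (r : Ω → Bool) (hr : Measurable r)
    (p : ℝ) (hp : p ∈ Set.Ioo (0 : ℝ) 1)
    (μpos μneg : Measure Ω) [IsProbabilityMeasure μpos] [IsProbabilityMeasure μneg]
    (hpos : μpos {o | r o = true} = 1) (hneg : μneg {o | r o = false} = 1)
    (μ : Measure Ω)
    (hμ : μ = ENNReal.ofReal p • μpos + ENNReal.ofReal (1 - p) • μneg)
    (Ahat : Ω → ℝ)
    (hAhat : ∀ o, Ahat o = if r o then 1 - p else -p)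
    (α : ℝ) (hα : 0 < α)
    (ρ : Ω → List ℝ) (hρ : ∀ o, ρ o ≠ [])
    (hlen : Integrable (fun o => ((ρ o).length : ℝ)) μ)
    (L : ℝ) (hL : L = ∫ o, ((ρ o).length : ℝ) ∂μ)
    (s : Ω → ℝ)
    (hs : ∀ o, s o = (1 / L) * (ρ o).sum)
    (hspint : Integrable s μpos) (hsmint : Integrable s μneg)
    (hsAint : Integrable (fun o => s o * Ahat o) μ) :
    ∫ o, α * (s o * Ahat o) ∂μ =
      α * (p * (1 - p)) * ((∫ o, s o ∂μpos) - ∫ o, s o ∂μneg) := by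
  obtain ⟨hp0, hp1⟩ := hp
  -- a.e. facts
  have hposae : ∀ᵐ o ∂μpos, r o = true := by
    rw [ae_iff]
    have : {o | ¬ r o = true} = {o | r o = true}ᶜ := rfl
    rw [this, measure_compl (show MeasurableSet {o | r o = true} from hr (measurableSet_singleton true)) (measure_ne_top _ _), hpos]
    simp
  have hnegae : ∀ᵐ o ∂μneg, r o = false := by
    rw [ae_iff]
    have : {o | ¬ r o = false} = {o | r o = false}ᶜ := rfl
    rw [this, measure_compl (show MeasurableSet {o | r o = false} from hr (measurableSet_singleton false)) (measure_ne_top _ _), hneg]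
    simp
  have hIpos : ∫ o, s o * Ahat o ∂μpos = (1 - p) * ∫ o, s o ∂μpos := by
    rw [← integral_const_mul]
    refine integral_congr_ae ?_
    filter_upwards [hposae] with o ho
    rw [hAhat, ho]; simp; ring
  have hIneg : ∫ o, s o * Ahat o ∂μneg = (-p) * ∫ o, s o ∂μneg := by
    rw [← integral_const_mul]
    refine integral_congr_ae ?_
    filter_upwards [hnegae] with o ho
    rw [hAhat, ho]; simp [mul_comm]
  have hint := hsAint
  rw [hμ] at hint
  have h1 := (integrable_add_measure.mp hint).1
  have h2 := (integrable_add_measure.mp hint).2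
  rw [integral_const_mul, hμ, integral_add_measure h1 h2, integral_smul_measure,
    integral_smul_measure, ENNReal.toReal_ofReal hp0.le,
    ENNReal.toReal_ofReal (by linarith : (0:ℝ) ≤ 1 - p), smul_eq_mul, smul_eq_mul,
    hIpos, hIneg]
  ring
end

section
/- Let μ⁺ and μ⁻ be probability measures on a measurable space Ω, let τ > 0, and let s : Ω → ℝ be integrable with respect to both μ⁺ and μ⁻. Assume that for every o the function o′ ↦ exp((s(o′) − s(o))/τ) is μ⁻-integrable and that the function o ↦ −τ · log( ∫ exp((s(o′) − s(o))/τ) dμ⁻(o′) ) is μ⁺-integrable. Then ∫ [ −τ · log( ∫ exp((s(o′) − s(o))/τ) dμ⁻(o′) ) ] dμ⁺(o) ≤ ∫ s dμ⁺ − ∫ s dμ⁻, i.e., the DRO objective J₂ is at most the plain discriminative objective J₁. -/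
open MeasureTheory

theorem stmt_12 {Ω : Type*} [MeasurableSpace Ω]
    (μpos μneg : Measure Ω) [IsProbabilityMeasure μpos] [IsProbabilityMeasure μneg]
    (τ : ℝ) (hτ : 0 < τ)
    (s : Ω → ℝ) (hspos : Integrable s μpos) (hsneg : Integrable s μneg)
    (hexp : ∀ o, Integrable (fun o' => Real.exp ((s o' - s o) / τ)) μneg)
    (hint : Integrable
      (fun o => -τ * Real.log (∫ o', Real.exp ((s o' - s o) / τ) ∂μneg)) μpos) :
    ∫ o, -τ * Real.log (∫ o', Real.exp ((s o' - s o) / τ) ∂μneg) ∂μpos ≤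
      (∫ o, s o ∂μpos) - ∫ o', s o' ∂μneg := by
  have hpt : ∀ o, -τ * Real.log (∫ o', Real.exp ((s o' - s o) / τ) ∂μneg) ≤
      s o - ∫ o', s o' ∂μneg := by
    intro o
    set f : Ω → ℝ := fun o' => (s o' - s o) / τ with hf
    have hfi : Integrable f μneg := (hsneg.sub (integrable_const _)).div_const τ
    have hjen : Real.exp (∫ x, f x ∂μneg) ≤ ∫ x, Real.exp (f x) ∂μneg :=
      convexOn_exp.map_integral_le Real.continuous_exp.continuousOn isClosed_univ
        (Filter.Eventually.of_forall fun _ => trivial) hfi (hexp o)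
    have hpos : 0 < ∫ x, Real.exp (f x) ∂μneg := integral_exp_pos (hexp o)
    have hlog : ∫ x, f x ∂μneg ≤ Real.log (∫ x, Real.exp (f x) ∂μneg) :=
      (Real.le_log_iff_exp_le hpos).mpr hjen
    have hI : ∫ x, f x ∂μneg = ((∫ o', s o' ∂μneg) - s o) / τ := by
      rw [integral_div, integral_sub hsneg (integrable_const _), integral_const]
      simp
    have := mul_le_mul_of_nonneg_left hlog (le_of_lt hτ)
    rw [hI, mul_div_cancel₀ _ hτ.ne'] at this
    linarith
  have hub : Integrable (fun o => s o - ∫ o', s o' ∂μneg) μpos :=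
    hspos.sub (integrable_const _)
  calc ∫ o, -τ * Real.log (∫ o', Real.exp ((s o' - s o) / τ) ∂μneg) ∂μpos
      ≤ ∫ o, (s o - ∫ o', s o' ∂μneg) ∂μpos := integral_mono hint hub hpt
    _ = (∫ o, s o ∂μpos) - ∫ o', s o' ∂μneg := by
        rw [integral_sub hspos (integrable_const _), integral_const]; simp
end
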